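/- Let h : X × X* → ℝ∪{+∞} be a convex function and let cl h denote its lower semicontinuous convex closure. Then h satisfies the auxiliary condition — for every (x₀,x₀*) ∈ X × X*, inf_{(x,x*)∈X×X*} ( h_{(x₀,x₀*)}(x,x*) + ½‖x‖² + ½‖x*‖² ) = 0 — if, and only if, cl h satisfies the same auxiliary condition. -/

import Mathlib

noncomputable section

open NormedSpace

/-- The translate `h_{(x₀,x₀*)}` of a function on `X × X*`. -/
def transl {X : Type*} [NormedAddCommGroup X] [NormedSpace ℝ X]
    (h : X × (X →L[ℝ] ℝ) → EReal) (w : X × (X →L[ℝ] ℝ)) :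
    X × (X →L[ℝ] ℝ) → EReal :=
  fun p => h (p.1 + w.1, p.2 + w.2) - ((w.2 p.1 + p.2 w.1 + w.2 w.1 : ℝ) : EReal)

/-- The translate of a function on `X* × X**`. -/
def translD {X : Type*} [NormedAddCommGroup X] [NormedSpace ℝ X]
    (g : (X →L[ℝ] ℝ) × ((X →L[ℝ] ℝ) →L[ℝ] ℝ) → EReal)
    (v : (X →L[ℝ] ℝ) × ((X →L[ℝ] ℝ) →L[ℝ] ℝ)) :
    (X →L[ℝ] ℝ) × ((X →L[ℝ] ℝ) →L[ℝ] ℝ) → EReal :=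
  fun q => g (q.1 + v.1, q.2 + v.2) - ((v.2 q.1 + q.2 v.1 + v.2 v.1 : ℝ) : EReal)

/-- The conjugate `h* : X* × X** → ℝ ∪ {±∞}`,
`h*(x*,x**) = sup_{(y,y*)} ⟨y,x*⟩ + ⟨y*,x**⟩ − h(y,y*)`. -/
def conj {X : Type*} [NormedAddCommGroup X] [NormedSpace ℝ X]
    (h : X × (X →L[ℝ] ℝ) → EReal) :
    (X →L[ℝ] ℝ) × ((X →L[ℝ] ℝ) →L[ℝ] ℝ) → EReal :=
  fun q => ⨆ p : X × (X →L[ℝ] ℝ), (((q.1 p.1 + q.2 p.2 : ℝ) : EReal) - h p)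

/-- Convexity of an `EReal`-valued function. -/
def ConvexE {X : Type*} [NormedAddCommGroup X] [NormedSpace ℝ X]
    (h : X × (X →L[ℝ] ℝ) → EReal) : Prop :=
  ∀ p q : X × (X →L[ℝ] ℝ), ∀ a b : ℝ, 0 ≤ a → 0 ≤ b → a + b = 1 →
    h (a • p + b • q) ≤ (a : EReal) * h p + (b : EReal) * h q

/-- The auxiliary condition:
`inf_{(x,x*)} h_{(x₀,x₀*)}(x,x*) + ½‖x‖² + ½‖x*‖² = 0` for all `(x₀,x₀*)`. -/
def AuxCond {X : Type*} [NormedAddCommGroup X] [NormedSpace ℝ X]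
    (h : X × (X →L[ℝ] ℝ) → EReal) : Prop :=
  ∀ w : X × (X →L[ℝ] ℝ),
    (⨅ p : X × (X →L[ℝ] ℝ),
      (transl h w p + ((‖p.1‖ ^ 2 / 2 + ‖p.2‖ ^ 2 / 2 : ℝ) : EReal))) = 0

/-- Monotone operator (identified with its graph). -/
def MonotoneSet {X : Type*} [NormedAddCommGroup X] [NormedSpace ℝ X]
    (T : Set (X × (X →L[ℝ] ℝ))) : Prop :=
  ∀ p ∈ T, ∀ q ∈ T, 0 ≤ (p.2 - q.2) (p.1 - q.1)

/-- Maximal monotone operator. -/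
def MaximalMonotone {X : Type*} [NormedAddCommGroup X] [NormedSpace ℝ X]
    (T : Set (X × (X →L[ℝ] ℝ))) : Prop :=
  MonotoneSet T ∧ ∀ S : Set (X × (X →L[ℝ] ℝ)), MonotoneSet S → T ⊆ S → S = T

/-- The Fitzpatrick family of `T`. -/
def FitzFamily {X : Type*} [NormedAddCommGroup X] [NormedSpace ℝ X]
    (T : Set (X × (X →L[ℝ] ℝ))) : Set (X × (X →L[ℝ] ℝ) → EReal) :=
  {h | ConvexE h ∧ LowerSemicontinuous h ∧
      (∀ p : X × (X →L[ℝ] ℝ), (p.2 p.1 : EReal) ≤ h p) ∧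
      ∀ p ∈ T, h p = (p.2 p.1 : EReal)}

/-- `T` is of type (NI): `inf_{(y,y*)∈T} ⟨x*−y*, x**−Jy⟩ ≤ 0` for all `(x*,x**)`. -/
def TypeNI {X : Type*} [NormedAddCommGroup X] [NormedSpace ℝ X]
    (T : Set (X × (X →L[ℝ] ℝ))) : Prop :=
  ∀ q : (X →L[ℝ] ℝ) × ((X →L[ℝ] ℝ) →L[ℝ] ℝ),
    (⨅ p : T, (((q.2 - inclusionInDoubleDual ℝ X p.1.1) (q.1 - p.1.2) : ℝ) : EReal)) ≤ 0



/-! ### Auxiliary lemmas for `stmt_5` -/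

open Filter Topology in
/-- The lower semicontinuous hull of an `EReal`-valued function. -/
noncomputable def lscHull5 {Z : Type*} [TopologicalSpace Z] (f : Z → EReal) : Z → EReal :=
  fun q => ⨆ U ∈ 𝓝 q, ⨅ x ∈ U, f x

open Filter Topology in
lemma biInf_le_lscHull5 {Z : Type*} [TopologicalSpace Z] (f : Z → EReal) {q : Z} {U : Set Z}
    (hU : U ∈ 𝓝 q) : (⨅ x ∈ U, f x) ≤ lscHull5 f q :=
  le_biSup (fun U => ⨅ x ∈ U, f x) hU

open Filter Topology in
lemma lscHull5_le {Z : Type*} [TopologicalSpace Z] (f : Z → EReal) (q : Z) :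
    lscHull5 f q ≤ f q :=
  iSup₂_le fun _U hU => biInf_le _ (mem_of_mem_nhds hU)

open Filter Topology in
lemma lscHull5_lt {Z : Type*} [TopologicalSpace Z] {f : Z → EReal} {q : Z} {c : EReal}
    (hc : lscHull5 f q < c) {U : Set Z} (hU : U ∈ 𝓝 q) : ∃ x ∈ U, f x < c := by
  have h2 : (⨅ x ∈ U, f x) < c := lt_of_le_of_lt (biInf_le_lscHull5 f hU) hc
  rw [iInf_lt_iff] at h2
  obtain ⟨x, hx⟩ := h2
  rw [iInf_lt_iff] at hx
  exact ⟨x, hx.choose, hx.choose_spec⟩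

open Filter Topology in
lemma lscHull5_lsc {Z : Type*} [TopologicalSpace Z] (f : Z → EReal) :
    LowerSemicontinuous (lscHull5 f) := by
  intro q y hy
  rw [lscHull5, gt_iff_lt, lt_iSup_iff] at hy
  obtain ⟨U, hy⟩ := hy
  rw [lt_iSup_iff] at hy
  obtain ⟨hU, hy⟩ := hy
  filter_upwards [interior_mem_nhds.2 hU] with q' hq'
  refine lt_of_lt_of_le hy (le_trans (biInf_mono fun x hx => interior_subset hx) ?_)
  exact biInf_le_lscHull5 f (isOpen_interior.mem_nhds hq')

open Filter Topology in
lemma le_lscHull5_of_lsc {Z : Type*} [TopologicalSpace Z] {f g : Z → EReal}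
    (hg : LowerSemicontinuous g) (hgf : ∀ q, g q ≤ f q) (q : Z) : g q ≤ lscHull5 f q := by
  by_contra hlt
  push_neg at hlt
  obtain ⟨c, hc1, hc2⟩ := EReal.exists_between_coe_real hlt
  have hU : {q' | (c : EReal) < g q'} ∈ 𝓝 q := hg q _ hc2
  have h1 : ((c : ℝ) : EReal) ≤ ⨅ x ∈ {q' | (c : EReal) < g q'}, f x :=
    le_iInf₂ fun x hx => le_trans (le_of_lt hx) (hgf x)
  exact absurd (le_trans h1 (biInf_le_lscHull5 f hU)) (not_le.2 hc1)

lemma ereal_sub_add_coe5 (x : EReal) (r s : ℝ) :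
    x - (r : EReal) + (s : EReal) = x + ((s - r : ℝ) : EReal) := by
  induction x using EReal.rec with
  | bot => rw [EReal.bot_sub, EReal.bot_add, EReal.bot_add]
  | top => rw [EReal.top_sub_coe, EReal.top_add_coe, EReal.top_add_coe]
  | coe a => norm_cast; ring

lemma ereal_lt_coe_sub5 (x : EReal) (t u : ℝ) (h : x + (t : EReal) < (u : EReal)) :
    x < ((u - t : ℝ) : EReal) := by
  induction x using EReal.rec with
  | bot => exact bot_lt_iff_ne_bot.2 (EReal.coe_ne_bot _)
  | top => rw [EReal.top_add_coe] at h; exact absurd h (by simp)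
  | coe a => norm_cast at h ⊢; linarith

lemma ereal_mul_ne_bot_of_pos5 {b : ℝ} (hb : 0 < b) {x : EReal} (hx : x ≠ ⊥) :
    (b : EReal) * x ≠ ⊥ := by
  induction x using EReal.rec with
  | bot => exact absurd rfl hx
  | coe v => rw [← EReal.coe_mul]; exact EReal.coe_ne_bot _
  | top => rw [EReal.mul_top_of_pos (by exact_mod_cast hb)]; simp

open Filter Topology in
lemma key5 {Z : Type*} [NormedAddCommGroup Z] (f : Z → EReal) (c : Z → ℝ) (hc : Continuous c)
    (w : Z) :
    (⨅ p, f (p + w) + ((c p : ℝ) : EReal)) ≤ ⨅ p, lscHull5 f (p + w) + ((c p : ℝ) : EReal) := by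
  refine le_iInf fun p₀ => ?_
  by_contra hlt
  push_neg at hlt
  obtain ⟨r, hr1, hr2⟩ := EReal.exists_between_coe_real hlt
  obtain ⟨s, hs1, hs2⟩ := EReal.exists_between_coe_real hr1
  rw [show ((s : ℝ) : EReal) < r ↔ s < r from EReal.coe_lt_coe_iff] at hs2
  have hG : lscHull5 f (p₀ + w) < ((s - c p₀ : ℝ) : EReal) := ereal_lt_coe_sub5 _ _ _ hs1
  have hU' : {p : Z | c p < c p₀ + (r - s)} ∈ 𝓝 p₀ :=
    hc.continuousAt.preimage_mem_nhds (Iio_mem_nhds (by linarith))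
  have hU : (fun q : Z => q - w) ⁻¹' {p : Z | c p < c p₀ + (r - s)} ∈ 𝓝 (p₀ + w) := by
    refine (continuous_id.sub continuous_const).continuousAt.preimage_mem_nhds ?_
    simpa using hU'
  obtain ⟨x, hxU, hxf⟩ := lscHull5_lt hG hU
  have hcx : c (x - w) < c p₀ + (r - s) := hxU
  have hfx : f (x - w + w) < ((s - c p₀ : ℝ) : EReal) := by rwa [sub_add_cancel]
  have hlt2 : f (x - w + w) + ((c (x - w) : ℝ) : EReal) < ((r : ℝ) : EReal) := by
    have h3 := EReal.add_lt_add hfx (EReal.coe_lt_coe_iff.2 hcx)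
    rw [← EReal.coe_add] at h3
    exact lt_of_lt_of_le h3 (by norm_cast; linarith)
  exact absurd (le_trans (iInf_le _ (x - w)) hlt2.le) (not_le.2 hr2)

lemma convexE_bot5 {X : Type*} [NormedAddCommGroup X] [NormedSpace ℝ X]
    {g : X × (X →L[ℝ] ℝ) → EReal} (hg : ConvexE g) {p₀ : X × (X →L[ℝ] ℝ)}
    (hp₀ : g p₀ = ⊥) (z : X × (X →L[ℝ] ℝ)) : g z = ⊥ := by
  have h2 : (1/2 : ℝ) • p₀ + (1/2 : ℝ) • ((2:ℝ) • z - p₀) = z := by module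
  have h3 := hg p₀ ((2:ℝ) • z - p₀) (1/2) (1/2) (by norm_num) (by norm_num) (by norm_num)
  rw [h2, hp₀] at h3
  have hb : ((1/2 : ℝ) : EReal) * ⊥ = ⊥ := EReal.coe_mul_bot_of_pos (by norm_num)
  rw [hb, EReal.bot_add] at h3
  exact le_bot_iff.1 h3

open Filter Topology in
lemma convexE_lscHull5 {X : Type*} [NormedAddCommGroup X] [NormedSpace ℝ X]
    {h : X × (X →L[ℝ] ℝ) → EReal} (hconv : ConvexE h)
    (hB : ∀ q, lscHull5 h q ≠ ⊥) : ConvexE (lscHull5 h) := by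
  intro p q a b ha hb hab
  rcases ha.eq_or_lt with rfl | ha'
  · have hb1 : b = 1 := by linarith
    subst hb1
    simp [zero_smul, one_smul, zero_add]
  rcases hb.eq_or_lt with rfl | hb'
  · have ha1 : a = 1 := by linarith
    subst ha1
    simp [zero_smul, one_smul, add_zero]
  by_cases hptop : lscHull5 h p = ⊤
  · rw [hptop, EReal.mul_top_of_pos (by exact_mod_cast ha'),
      EReal.top_add_of_ne_bot (ereal_mul_ne_bot_of_pos5 hb' (hB q))]
    exact le_top
  by_cases hqtop : lscHull5 h q = ⊤
  · rw [hqtop, EReal.mul_top_of_pos (by exact_mod_cast hb'),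
      EReal.add_top_of_ne_bot (ereal_mul_ne_bot_of_pos5 ha' (hB p))]
    exact le_top
  obtain ⟨vp, hvp⟩ : ∃ v : ℝ, lscHull5 h p = (v : EReal) := by
    lift lscHull5 h p to ℝ using ⟨hptop, hB p⟩ with v; exact ⟨v, rfl⟩
  obtain ⟨vq, hvq⟩ : ∃ v : ℝ, lscHull5 h q = (v : EReal) := by
    lift lscHull5 h q to ℝ using ⟨hqtop, hB q⟩ with v; exact ⟨v, rfl⟩
  rw [hvp, hvq, ← EReal.coe_mul, ← EReal.coe_mul, ← EReal.coe_add]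
  refine iSup₂_le fun U hU => ?_
  by_contra hUlt
  push_neg at hUlt
  obtain ⟨r, hr1, hr2⟩ := EReal.exists_between_coe_real hUlt
  rw [EReal.coe_lt_coe_iff] at hr1
  set ε : ℝ := r - (a * vp + b * vq) with hε
  have hεpos : 0 < ε := by linarith
  have hφ : Continuous fun pr : (X × (X →L[ℝ] ℝ)) × (X × (X →L[ℝ] ℝ)) =>
      a • pr.1 + b • pr.2 := (continuous_fst.const_smul a).add (continuous_snd.const_smul b)
  have hpre : (fun pr : (X × (X →L[ℝ] ℝ)) × (X × (X →L[ℝ] ℝ)) =>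
      a • pr.1 + b • pr.2) ⁻¹' U ∈ 𝓝 (p, q) := hφ.continuousAt.preimage_mem_nhds hU
  rw [mem_nhds_prod_iff] at hpre
  obtain ⟨U₁, hU₁, U₂, hU₂, hsub⟩ := hpre
  have hxp : lscHull5 h p < ((vp + ε : ℝ) : EReal) := by rw [hvp]; exact_mod_cast by linarith
  have hxq : lscHull5 h q < ((vq + ε : ℝ) : EReal) := by rw [hvq]; exact_mod_cast by linarith
  obtain ⟨x, hxU₁, hxlt⟩ := lscHull5_lt hxp hU₁
  obtain ⟨y, hyU₂, hylt⟩ := lscHull5_lt hxq hU₂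
  have hmem : a • x + b • y ∈ U := hsub (Set.mk_mem_prod hxU₁ hyU₂)
  have hcomb : h (a • x + b • y) ≤ ((r : ℝ) : EReal) := by
    refine le_trans (hconv x y a b ha hb hab) ?_
    have h1 : (a : EReal) * h x ≤ (a : EReal) * ((vp + ε : ℝ) : EReal) :=
      mul_le_mul_of_nonneg_left hxlt.le (by exact_mod_cast ha)
    have h2 : (b : EReal) * h y ≤ (b : EReal) * ((vq + ε : ℝ) : EReal) :=
      mul_le_mul_of_nonneg_left hylt.le (by exact_mod_cast hb)
    refine le_trans (add_le_add h1 h2) ?_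
    rw [← EReal.coe_mul, ← EReal.coe_mul, ← EReal.coe_add, EReal.coe_le_coe_iff]
    nlinarith [hεpos]
  exact absurd (le_trans (biInf_le _ hmem) hcomb) (not_le.2 hr2)


theorem stmt_5 {X : Type*} [NormedAddCommGroup X] [NormedSpace ℝ X] [CompleteSpace X]
    (h : X × (X →L[ℝ] ℝ) → EReal) (hbot : ∀ p, h p ≠ ⊥) (hconv : ConvexE h)
    (clh : X × (X →L[ℝ] ℝ) → EReal)
    (hcl₁ : ConvexE clh) (hcl₂ : LowerSemicontinuous clh) (hcl₃ : ∀ p, clh p ≤ h p)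
    (hcl₄ : ∀ g : X × (X →L[ℝ] ℝ) → EReal, ConvexE g → LowerSemicontinuous g →
      (∀ p, g p ≤ h p) → ∀ p, g p ≤ clh p) :
    AuxCond h ↔ AuxCond clh := by
  classical
  -- the continuous real "cost" function associated to a translation `w`
  set cf : (X × (X →L[ℝ] ℝ)) → (X × (X →L[ℝ] ℝ)) → ℝ :=
    fun w p => (‖p.1‖ ^ 2 / 2 + ‖p.2‖ ^ 2 / 2) - (w.2 p.1 + p.2 w.1 + w.2 w.1) with hcf
  have hcont : ∀ w, Continuous (cf w) := by
    intro w
    apply Continuous.sub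
    · exact ((continuous_fst.norm.pow 2).div_const 2).add
        ((continuous_snd.norm.pow 2).div_const 2)
    · exact ((w.2.continuous.comp continuous_fst).add
        ((ContinuousLinearMap.apply ℝ ℝ w.1).continuous.comp continuous_snd)).add
        continuous_const
  have hrw : ∀ (g : X × (X →L[ℝ] ℝ) → EReal) (w : X × (X →L[ℝ] ℝ)),
      (⨅ p : X × (X →L[ℝ] ℝ),
        (transl g w p + ((‖p.1‖ ^ 2 / 2 + ‖p.2‖ ^ 2 / 2 : ℝ) : EReal)))
        = ⨅ p : X × (X →L[ℝ] ℝ), g (p + w) + ((cf w p : ℝ) : EReal) := by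
    intro g w
    refine iInf_congr fun p => ?_
    show g (p.1 + w.1, p.2 + w.2) - ((w.2 p.1 + p.2 w.1 + w.2 w.1 : ℝ) : EReal) + _ = _
    rw [ereal_sub_add_coe5]
    rfl
  have EQ : ∀ w : X × (X →L[ℝ] ℝ),
      (⨅ p : X × (X →L[ℝ] ℝ),
        (transl h w p + ((‖p.1‖ ^ 2 / 2 + ‖p.2‖ ^ 2 / 2 : ℝ) : EReal)))
        = ⨅ p : X × (X →L[ℝ] ℝ),
        (transl clh w p + ((‖p.1‖ ^ 2 / 2 + ‖p.2‖ ^ 2 / 2 : ℝ) : EReal)) := by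
    intro w
    rw [hrw h w, hrw clh w]
    by_cases hB : ∀ q, lscHull5 h q ≠ ⊥
    · have hGclh : ∀ q, lscHull5 h q ≤ clh q :=
        hcl₄ _ (convexE_lscHull5 hconv hB) (lscHull5_lsc h) (fun q => lscHull5_le h q)
      refine le_antisymm ?_ ?_
      · refine le_trans (key5 h (cf w) (hcont w) w) (iInf_mono fun p => ?_)
        exact add_le_add_left (hGclh _) _
      · exact iInf_mono fun p => add_le_add_left (hcl₃ _) _
    · push_neg at hB
      obtain ⟨q₀, hq₀⟩ := hB
      have hclq₀ : clh q₀ = ⊥ :=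
        le_bot_iff.1 (le_trans (le_lscHull5_of_lsc hcl₂ hcl₃ q₀) hq₀.le)
      have hclbot : ∀ z, clh z = ⊥ := convexE_bot5 hcl₁ hclq₀
      have h1 : (⨅ p : X × (X →L[ℝ] ℝ), clh (p + w) + ((cf w p : ℝ) : EReal)) = ⊥ := by
        refine le_bot_iff.1 (le_trans (iInf_le _ (q₀ - w)) ?_)
        rw [hclbot, EReal.bot_add]
      have h2 : (⨅ p : X × (X →L[ℝ] ℝ), h (p + w) + ((cf w p : ℝ) : EReal)) = ⊥ := by
        refine le_bot_iff.1 (le_trans (key5 h (cf w) (hcont w) w)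
          (le_trans (iInf_le _ (q₀ - w)) ?_))
        rw [sub_add_cancel, hq₀, EReal.bot_add]
      rw [h1, h2]
  constructor
  · intro H w
    rw [← EQ w]
    exact H w
  · intro H w
    rw [EQ w]
    exact H w


end
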